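/- Let b ≥ 2 and let D be a set of exactly b nonnegative integers with 0 ∈ D and gcd(D) = 1 satisfying the Kenyon condition with respect to b (equivalently, by Kenyon's criterion, D is a tile digit set of b). Then there exists a blocking N of the Φ-tree of b such that the kernel polynomial ∏_{d ∈ N} Φ_d(X) divides P_D(X) in ℤ[X]. -/

import Mathlib

open Polynomial

/-- The mask polynomial `P_A(X) = ∑_{a ∈ A} X^a ∈ ℤ[X]` of a finite set of naturals. -/
noncomputable def mask (A : Finset ℕ) : Polynomial ℤ := ∑ a ∈ A, X ^ a

/-- The Kenyon condition with respect to `b`. -/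
def Kenyon (b : ℕ) (D : Finset ℕ) : Prop :=
  ∀ m : ℕ, 1 ≤ m → ∃ k : ℕ, 1 ≤ k ∧
    Polynomial.aeval (Complex.exp (2 * Real.pi * Complex.I * (m : ℂ) / (b : ℂ) ^ k)) (mask D) = 0

/-- An infinite path in the Φ-tree of `b` (indices `k ≥ 1`). -/
def IsPhiPath (b : ℕ) (d : ℕ → ℕ) : Prop :=
  1 < d 1 ∧ d 1 ∣ b ∧ ∀ k : ℕ, 1 ≤ k → 1 < d (k + 1) ∧
    cyclotomic (d (k + 1)) ℤ ∣ (cyclotomic (d k) ℤ).comp (X ^ b)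

/-- A blocking of the Φ-tree of `b`. -/
def IsPhiBlocking (b : ℕ) (N : Finset ℕ) : Prop :=
  (∀ e ∈ N, 1 < e ∧ ∃ d : ℕ → ℕ, IsPhiPath b d ∧ ∃ k : ℕ, 1 ≤ k ∧ d k = e) ∧
    ∀ d : ℕ → ℕ, IsPhiPath b d → ∃! k : ℕ, 1 ≤ k ∧ d k ∈ N

private lemma natFactEq {a c : ℕ} (ha : a ≠ 0) (hc : c ≠ 0)
    (h : ∀ p, a.factorization p = c.factorization p) : a = c :=
  Nat.factorization_inj ha hc (Finsupp.ext h)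

private lemma divGcdNeZero {e x : ℕ} (he : e ≠ 0) : e / Nat.gcd e x ≠ 0 := by
  intro h
  have h1 : Nat.gcd e x ∣ e := Nat.gcd_dvd_left e x
  have := Nat.div_mul_cancel h1
  rw [h, zero_mul] at this
  exact he this.symm

private lemma factDivGcdPow {e b : ℕ} (he : e ≠ 0) (hb : b ≠ 0) (t p : ℕ) :
    (e / Nat.gcd e (b ^ t)).factorization p
      = e.factorization p - min (e.factorization p) (t * b.factorization p) := by
  have hbt : b ^ t ≠ 0 := pow_ne_zero t hb
  rw [Nat.factorization_div (Nat.gcd_dvd_left e (b ^ t)),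
    Nat.factorization_gcd he hbt, Nat.factorization_pow]
  simp [Finsupp.tsub_apply, Finsupp.inf_apply, mul_comm]

/-- L1: iterated parent. -/
private lemma parentStep {e b : ℕ} (he : e ≠ 0) (hb : b ≠ 0) (t : ℕ) :
    (e / Nat.gcd e (b ^ t)) / Nat.gcd (e / Nat.gcd e (b ^ t)) b
      = e / Nat.gcd e (b ^ (t + 1)) := by
  have h1 : e / Nat.gcd e (b ^ t) ≠ 0 := divGcdNeZero he
  refine natFactEq (divGcdNeZero h1) (divGcdNeZero he) fun p => ?_
  have h2 := factDivGcdPow he hb t p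
  have h3 := factDivGcdPow he hb (t + 1) p
  have h4 : (e / Nat.gcd e (b ^ t)) / Nat.gcd (e / Nat.gcd e (b ^ t)) b
      = (e / Nat.gcd e (b ^ t)) / Nat.gcd (e / Nat.gcd e (b ^ t)) (b ^ 1) := by
    rw [pow_one]
  have h5 : (t + 1) * b.factorization p = t * b.factorization p + b.factorization p := by ring
  rw [h4, factDivGcdPow h1 hb 1 p, h2, h3, h5]
  omega

/-- L3 -/
private lemma kenyonOrderLow {d b j k : ℕ} (hb : b ≠ 0) (hd : d ≠ 0) (hdvd : d ∣ b ^ j)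
    (hkj : k ≤ j) :
    b ^ k / Nat.gcd (b ^ k) (b ^ j / d) = d / Nat.gcd d (b ^ (j - k)) := by
  have hbj : b ^ j ≠ 0 := pow_ne_zero j hb
  have hbk : b ^ k ≠ 0 := pow_ne_zero k hb
  have hm : b ^ j / d ≠ 0 := by
    intro h; exact hbj (by simpa [h] using (Nat.div_mul_cancel hdvd).symm)
  refine natFactEq (divGcdNeZero hbk) (divGcdNeZero hd) fun p => ?_
  have h1 : (b ^ k / Nat.gcd (b ^ k) (b ^ j / d)).factorization p
      = (b ^ k).factorization p - min ((b ^ k).factorization p) ((b ^ j / d).factorization p) := by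
    rw [Nat.factorization_div (Nat.gcd_dvd_left _ _), Nat.factorization_gcd hbk hm]
    simp [Finsupp.tsub_apply, Finsupp.inf_apply]
  have h2 := factDivGcdPow hd hb (j - k) p
  have h3 : (b ^ j / d).factorization p = (b ^ j).factorization p - d.factorization p := by
    rw [Nat.factorization_div hdvd]; simp [Finsupp.tsub_apply]
  have h4 : (b ^ j).factorization p = j * b.factorization p := by
    rw [Nat.factorization_pow]; simp [mul_comm]
  have h5 : (b ^ k).factorization p = k * b.factorization p := by
    rw [Nat.factorization_pow]; simp [mul_comm]
  have h6 : d.factorization p ≤ (b ^ j).factorization p :=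
    (Nat.factorization_le_iff_dvd hd hbj).mpr hdvd p
  have h7 : (j - k) * b.factorization p = j * b.factorization p - k * b.factorization p :=
    Nat.sub_mul j k _
  have h8 : k * b.factorization p ≤ j * b.factorization p :=
    Nat.mul_le_mul_right _ hkj
  rw [h1, h2, h3, h4, h5, h7]
  omega

/-- L4 -/
private lemma kenyonOrderHigh {d b j k : ℕ} (hb : b ≠ 0) (hd : d ≠ 0) (hdvd : d ∣ b ^ j)
    (hkj : j ≤ k) :
    b ^ k / Nat.gcd (b ^ k) (b ^ j / d) = b ^ (k - j) * d := by
  have hbj : b ^ j ≠ 0 := pow_ne_zero j hb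
  have hbk : b ^ k ≠ 0 := pow_ne_zero k hb
  have hm : b ^ j / d ≠ 0 := by
    intro h; exact hbj (by simpa [h] using (Nat.div_mul_cancel hdvd).symm)
  refine natFactEq (divGcdNeZero hbk) (mul_ne_zero (pow_ne_zero _ hb) hd) fun p => ?_
  have h1 : (b ^ k / Nat.gcd (b ^ k) (b ^ j / d)).factorization p
      = (b ^ k).factorization p - min ((b ^ k).factorization p) ((b ^ j / d).factorization p) := by
    rw [Nat.factorization_div (Nat.gcd_dvd_left _ _), Nat.factorization_gcd hbk hm]
    simp [Finsupp.tsub_apply, Finsupp.inf_apply]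
  have h3 : (b ^ j / d).factorization p = (b ^ j).factorization p - d.factorization p := by
    rw [Nat.factorization_div hdvd]; simp [Finsupp.tsub_apply]
  have h4 : (b ^ j).factorization p = j * b.factorization p := by
    rw [Nat.factorization_pow]; simp [mul_comm]
  have h5 : (b ^ k).factorization p = k * b.factorization p := by
    rw [Nat.factorization_pow]; simp [mul_comm]
  have h6 : d.factorization p ≤ (b ^ j).factorization p :=
    (Nat.factorization_le_iff_dvd hd hbj).mpr hdvd p
  have h8 : j * b.factorization p ≤ k * b.factorization p :=
    Nat.mul_le_mul_right _ hkj
  have h9 : (b ^ (k - j) * d).factorization p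
      = (k - j) * b.factorization p + d.factorization p := by
    rw [Nat.factorization_mul (pow_ne_zero _ hb) hd, Nat.factorization_pow]
    simp [mul_comm]
  have h7 : (k - j) * b.factorization p = k * b.factorization p - j * b.factorization p :=
    Nat.sub_mul k j _
  rw [h1, h3, h4, h5, h9, h7]
  omega

/-- L5 -/
private lemma divGcdDvdBase {e b t : ℕ} (hb : b ≠ 0) (he : e ≠ 0) (hdvd : e ∣ b ^ (t + 1)) :
    e / Nat.gcd e (b ^ t) ∣ b := by
  rw [← Nat.factorization_le_iff_dvd (divGcdNeZero he) hb]
  intro p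
  have h1 := factDivGcdPow he hb t p
  have h2 : e.factorization p ≤ (b ^ (t + 1)).factorization p :=
    (Nat.factorization_le_iff_dvd he (pow_ne_zero _ hb)).mpr hdvd p
  have h3 : (b ^ (t + 1)).factorization p = (t + 1) * b.factorization p := by
    rw [Nat.factorization_pow]; simp [mul_comm]
  have h4 : (t + 1) * b.factorization p = t * b.factorization p + b.factorization p := by ring
  rw [h1]
  omega

/-- L6 -/
private lemma divGcdEqOne {e b t : ℕ} (he : e ≠ 0) (hdvd : e ∣ b ^ t) :
    e / Nat.gcd e (b ^ t) = 1 := by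
  rw [Nat.gcd_eq_left hdvd, Nat.div_self (Nat.pos_of_ne_zero he)]

private lemma dvdOfDivGcdEqOne {e b t : ℕ} (he : e ≠ 0) (h : e / Nat.gcd e (b ^ t) = 1) :
    e ∣ b ^ t := by
  have h1 : Nat.gcd e (b ^ t) ∣ e := Nat.gcd_dvd_left _ _
  have h2 := Nat.div_mul_cancel h1
  rw [h, one_mul] at h2
  rw [← h2]; exact Nat.gcd_dvd_right _ _

private lemma aevalCompPow {f : Polynomial ℤ} {z : ℂ} {b : ℕ} :
    aeval z (f.comp (X ^ b)) = aeval (z ^ b) f := by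
  rw [aeval_comp, map_pow, aeval_X]

private lemma aevalCyclo {n : ℕ} {z : ℂ} :
    aeval z (cyclotomic n ℤ) = eval z (cyclotomic n ℂ) := by
  rw [aeval_def, eval₂_eq_eval_map, map_cyclotomic]

/-- cyclotomic s divides any integer polynomial vanishing at a primitive s-th root. -/
private lemma cycloDvdOfRoot {s : ℕ} (hs : 0 < s) {z : ℂ} (hz : IsPrimitiveRoot z s)
    {f : Polynomial ℤ} (h0 : aeval z f = 0) : cyclotomic s ℤ ∣ f := by
  rw [cyclotomic_eq_minpoly hz hs]
  exact minpoly.isIntegrallyClosed_dvd (hz.isIntegral hs) h0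

/-- Child direction ⟸. -/
private lemma childDvd {b e n : ℕ} (hb : b ≠ 0) (he : e ≠ 0) (hn : n ≠ 0)
    (hen : n * Nat.gcd e b = e) :
    cyclotomic e ℤ ∣ (cyclotomic n ℤ).comp (X ^ b) := by
  have he0 : 0 < e := Nat.pos_of_ne_zero he
  have hgpos : 0 < Nat.gcd e b := Nat.gcd_pos_of_pos_left b he0
  have hζ := Complex.isPrimitiveRoot_exp e he
  set ζ : ℂ := Complex.exp (2 * Real.pi * Complex.I / e) with hζdef
  have horder2 : orderOf (ζ ^ b) = n := by
    rw [orderOf_pow' ζ hb, ← hζ.eq_orderOf]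
    exact Nat.div_eq_of_eq_mul_left hgpos hen.symm
  have hprim : IsPrimitiveRoot (ζ ^ b) n := horder2 ▸ IsPrimitiveRoot.orderOf (ζ ^ b)
  refine cycloDvdOfRoot he0 hζ ?_
  rw [aevalCompPow, aevalCyclo]
  exact hprim.isRoot_cyclotomic (Nat.pos_of_ne_zero hn)

/-- Child direction ⟹. -/
private lemma childEq {b e n : ℕ} (hb : b ≠ 0) (he : 1 < e)
    (h : cyclotomic e ℤ ∣ (cyclotomic n ℤ).comp (X ^ b)) :
    n ≠ 0 ∧ n * Nat.gcd e b = e := by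
  have he0 : 0 < e := by omega
  have hζ := Complex.isPrimitiveRoot_exp e (by omega)
  set ζ : ℂ := Complex.exp (2 * Real.pi * Complex.I / e) with hζdef
  have hroot : aeval ζ ((cyclotomic n ℤ).comp (X ^ b)) = 0 := by
    obtain ⟨c, hc⟩ := h
    rw [hc, map_mul]
    have : aeval ζ (cyclotomic e ℤ) = 0 := by
      rw [aevalCyclo]; exact hζ.isRoot_cyclotomic he0
    rw [this, zero_mul]
  rw [aevalCompPow, aevalCyclo] at hroot
  have hn : n ≠ 0 := by
    intro h0; rw [h0, cyclotomic_zero] at hroot; simp at hroot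
  haveI : NeZero ((n : ℂ)) := ⟨Nat.cast_ne_zero.mpr hn⟩
  have hprim : IsPrimitiveRoot (ζ ^ b) n := isRoot_cyclotomic_iff.mp hroot
  have horder : n = orderOf (ζ ^ b) := hprim.eq_orderOf
  have h2 : orderOf (ζ ^ b) = e / Nat.gcd e b := by
    rw [orderOf_pow' ζ hb, ← hζ.eq_orderOf]
  constructor
  · exact hn
  · rw [horder, h2, Nat.div_mul_cancel (Nat.gcd_dvd_left e b)]

/-- The set of d > 1 with cyclotomic d dividing f is finite. -/
private lemma cycloDvdFinite {f : Polynomial ℤ} (hf : f ≠ 0) :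
    {d : ℕ | 1 < d ∧ cyclotomic d ℤ ∣ f}.Finite := by
  have hmap : f.map (Int.castRingHom ℂ) ≠ 0 :=
    (Polynomial.map_ne_zero_iff (RingHom.injective_int _)).mpr hf
  apply Set.Finite.of_finite_image (f := fun d : ℕ => Complex.exp (2 * Real.pi * Complex.I / d))
  · apply Set.Finite.subset (f.map (Int.castRingHom ℂ)).roots.toFinset.finite_toSet
    rintro z ⟨d, ⟨hd1, hddvd⟩, rfl⟩
    have hζ := Complex.isPrimitiveRoot_exp d (by omega)
    simp only [Finset.mem_coe, Multiset.mem_toFinset]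
    rw [mem_roots hmap]
    obtain ⟨c, hc⟩ := hddvd
    rw [IsRoot.def, hc, Polynomial.map_mul, eval_mul, map_cyclotomic_int]
    have := hζ.isRoot_cyclotomic (show 0 < d by omega)
    rw [IsRoot.def] at this
    rw [this, zero_mul]
  · rintro d ⟨hd1, -⟩ e ⟨he1, -⟩ hde
    have hζd := Complex.isPrimitiveRoot_exp d (by omega)
    have hζe := Complex.isPrimitiveRoot_exp e (by omega)
    dsimp only at hde
    rw [hde] at hζd
    exact (hζd.unique hζe)

private lemma maskCard (D : Finset ℕ) : eval (1 : ℤ) (mask D) = D.card := by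
  simp [mask, eval_finset_sum]

private lemma kenyonSpec {b : ℕ} (hb : 2 ≤ b) {D : Finset ℕ} (hK : Kenyon b D) {m : ℕ}
    (hm : 1 ≤ m) :
    ∃ k, 1 ≤ k ∧ cyclotomic (b ^ k / Nat.gcd (b ^ k) m) ℤ ∣ mask D := by
  obtain ⟨k, hk, hz⟩ := hK m hm
  refine ⟨k, hk, ?_⟩
  have hbk : (b : ℕ) ^ k ≠ 0 := pow_ne_zero k (by omega)
  have hζ := Complex.isPrimitiveRoot_exp (b ^ k) hbk
  set ζ : ℂ := Complex.exp (2 * Real.pi * Complex.I / ((b ^ k : ℕ) : ℂ)) with hζdef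
  have hzeq : Complex.exp (2 * Real.pi * Complex.I * (m : ℂ) / (b : ℂ) ^ k) = ζ ^ m := by
    rw [hζdef, ← Complex.exp_nat_mul]
    push_cast
    ring_nf
  have hord : orderOf (ζ ^ m) = b ^ k / Nat.gcd (b ^ k) m := by
    rw [orderOf_pow' ζ (by omega : m ≠ 0), ← hζ.eq_orderOf]
  have hprim : IsPrimitiveRoot (ζ ^ m) (b ^ k / Nat.gcd (b ^ k) m) :=
    hord ▸ IsPrimitiveRoot.orderOf (ζ ^ m)
  have hgpos : 0 < Nat.gcd (b ^ k) m := Nat.gcd_pos_of_pos_left m (Nat.pos_of_ne_zero hbk)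
  have hspos : 0 < b ^ k / Nat.gcd (b ^ k) m :=
    Nat.div_pos (Nat.le_of_dvd (Nat.pos_of_ne_zero hbk) (Nat.gcd_dvd_left _ _)) hgpos
  exact cycloDvdOfRoot hspos hprim (by rwa [hzeq] at hz)

private lemma pathPos {b : ℕ} {d : ℕ → ℕ} (hd : IsPhiPath b d) : ∀ k, 1 ≤ k → 1 < d k := by
  intro k hk
  match k, hk with
  | 1, _ => exact hd.1
  | (n + 2), _ => exact (hd.2.2 (n + 1) (by omega)).1

private lemma pathParent {b : ℕ} (hb : b ≠ 0) {d : ℕ → ℕ} (hd : IsPhiPath b d) (k : ℕ)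
    (hk : 1 ≤ k) : d k ≠ 0 ∧ d k * Nat.gcd (d (k + 1)) b = d (k + 1) :=
  childEq hb (pathPos hd (k + 1) (by omega)) (hd.2.2 k hk).2

private lemma pathDvd {b : ℕ} (hb : b ≠ 0) {d : ℕ → ℕ} (hd : IsPhiPath b d) :
    ∀ k, 1 ≤ k → d k ∣ b ^ k := by
  intro k hk
  induction k with
  | zero => omega
  | succ n ih =>
    rcases Nat.lt_or_ge n 1 with h | h
    · have hn0 : n = 0 := by omega
      subst hn0
      simpa [pow_one] using hd.2.1
    · obtain ⟨hne, heq⟩ := pathParent hb hd n h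
      rw [← heq, pow_succ]
      exact mul_dvd_mul (ih h) (Nat.gcd_dvd_right _ _)

private lemma pathAncestor {b : ℕ} (hb : b ≠ 0) {d : ℕ → ℕ} (hd : IsPhiPath b d) :
    ∀ t k, 1 ≤ k → d (k + t) / Nat.gcd (d (k + t)) (b ^ t) = d k := by
  intro t
  induction t with
  | zero => intro k hk; simp
  | succ t ih =>
    intro k hk
    have hkt : k + (t + 1) = (k + 1) + t := by omega
    have hpos : 1 < d (k + (t + 1)) := pathPos hd _ (by omega)
    have h1 := parentStep (e := d (k + (t + 1))) (by omega) hb t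
    have ih' : d (k + (t + 1)) / Nat.gcd (d (k + (t + 1))) (b ^ t) = d (k + 1) := by
      rw [hkt]; exact ih (k + 1) (by omega)
    rw [ih'] at h1
    obtain ⟨hne, heq⟩ := pathParent hb hd k hk
    have hgpos : 0 < Nat.gcd (d (k + 1)) b :=
      Nat.gcd_pos_of_pos_left b (by have := pathPos hd (k+1) (by omega); omega)
    have h2 : d (k + 1) / Nat.gcd (d (k + 1)) b = d k :=
      Nat.div_eq_of_eq_mul_left hgpos heq.symm
    rw [h2] at h1
    exact h1.symm

private lemma pathGrowth {b : ℕ} (hb : b ≠ 0) {d : ℕ → ℕ} (hd : IsPhiPath b d) :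
    ∀ t, 2 ^ (t + 1) ≤ d (t + 1) := by
  intro t
  induction t with
  | zero => exact hd.1
  | succ t ih =>
    obtain ⟨hne, heq⟩ := pathParent hb hd (t + 1) (by omega)
    have hpos : 1 < d (t + 2) := pathPos hd (t + 2) (by omega)
    have hdvd : d (t + 2) ∣ b ^ (t + 2) := pathDvd hb hd (t + 2) (by omega)
    have hg2 : 2 ≤ Nat.gcd (d (t + 2)) b := by
      by_contra hg
      have hgpos : 0 < Nat.gcd (d (t + 2)) b := Nat.gcd_pos_of_pos_left b (by omega)
      have hg1 : Nat.gcd (d (t + 2)) b = 1 := by omega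
      have hcop : Nat.Coprime (d (t + 2)) (b ^ (t + 2)) :=
        Nat.Coprime.pow_right _ hg1
      have : Nat.gcd (d (t + 2)) (b ^ (t + 2)) = d (t + 2) := Nat.gcd_eq_left hdvd
      rw [hcop] at this
      omega
    calc 2 ^ (t + 2) = 2 ^ (t + 1) * 2 := by ring
    _ ≤ d (t + 1) * Nat.gcd (d (t + 2)) b := Nat.mul_le_mul ih hg2
    _ = d (t + 2) := heq

private lemma existsPathThrough {b : ℕ} (hb : 2 ≤ b) {e : ℕ} (he : 1 < e)
    (hdvd : ∃ k, e ∣ b ^ (k + 1)) :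
    ∃ d : ℕ → ℕ, IsPhiPath b d ∧ ∃ k, 1 ≤ k ∧ d k = e := by
  classical
  have hbne : b ≠ 0 := by omega
  have hene : e ≠ 0 := by omega
  set L : ℕ := Nat.find hdvd + 1 with hLdef
  have hL : e ∣ b ^ L := Nat.find_spec hdvd
  have hLmin : ∀ t, t < L → ¬ e ∣ b ^ t := by
    intro t ht hdvd'
    rcases Nat.eq_zero_or_pos t with rfl | hpos
    · rw [pow_zero, Nat.dvd_one] at hdvd'; omega
    · exact Nat.find_min hdvd (show t - 1 < Nat.find hdvd by omega)
        (by rwa [Nat.sub_add_cancel hpos])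
  set d : ℕ → ℕ := fun k => if k ≤ L then e / Nat.gcd e (b ^ (L - k)) else e * b ^ (k - L)
    with hddef
  have hdle : ∀ k, k ≤ L → d k = e / Nat.gcd e (b ^ (L - k)) := by
    intro k hk; simp only [hddef, if_pos hk]
  have hdgt : ∀ k, L ≤ k → d k = e * b ^ (k - L) := by
    intro k hk
    rcases Nat.eq_or_lt_of_le hk with rfl | h
    · simp [hddef]
    · simp only [hddef, if_neg (by omega : ¬ k ≤ L)]
  have hdpos : ∀ k, 1 ≤ k → k ≤ L → 1 < d k := by
    intro k hk1 hk
    rw [hdle k hk]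
    have h0 : e / Nat.gcd e (b ^ (L - k)) ≠ 0 := divGcdNeZero hene
    have h1 : e / Nat.gcd e (b ^ (L - k)) ≠ 1 := by
      intro h
      exact hLmin (L - k) (by omega) (dvdOfDivGcdEqOne hene h)
    exact lt_of_le_of_ne (Nat.one_le_iff_ne_zero.mpr h0) (Ne.symm h1)
  refine ⟨d, ⟨?_, ?_, ?_⟩, L, by omega, by rw [hdle L le_rfl]; simp⟩
  · exact hdpos 1 (by omega) (by omega)
  · rw [hdle 1 (by omega)]
    have : e ∣ b ^ ((L - 1) + 1) := by
      rw [Nat.sub_add_cancel (by omega : 1 ≤ L)]; exact hL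
    exact divGcdDvdBase hbne hene this
  · intro k hk
    rcases Nat.lt_or_ge k L with hkL | hkL
    · -- k + 1 ≤ L
      have hdk1 : d (k + 1) = e / Nat.gcd e (b ^ (L - (k + 1))) := hdle (k + 1) (by omega)
      have hdk : d k = e / Nat.gcd e (b ^ (L - k)) := hdle k (by omega)
      refine ⟨hdpos (k + 1) (by omega) (by omega), ?_⟩
      have hstep := parentStep hene hbne (L - (k + 1))
      have hLk : L - (k + 1) + 1 = L - k := by omega
      rw [hLk] at hstep
      have hn : d k = d (k + 1) / Nat.gcd (d (k + 1)) b := by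
        rw [hdk, hdk1, hstep]
      apply childDvd hbne (by have := hdpos (k + 1) (by omega) (by omega); omega)
      · rw [hdk]; exact divGcdNeZero hene
      · rw [hn, Nat.div_mul_cancel (Nat.gcd_dvd_left _ _)]
    · -- k ≥ L
      have hdk : d k = e * b ^ (k - L) := hdgt k hkL
      have hdk1 : d (k + 1) = e * b ^ (k + 1 - L) := hdgt (k + 1) (by omega)
      have hbdvd : b ∣ d (k + 1) := by
        rw [hdk1]
        have : b ^ (k + 1 - L) = b ^ (k - L) * b := by
          rw [← pow_succ]; congr 1; omega
        rw [this, ← mul_assoc]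
        exact dvd_mul_left b (e * b ^ (k - L))
      have hgcd : Nat.gcd (d (k + 1)) b = b := Nat.gcd_eq_right hbdvd
      have hpos1 : 1 < d (k + 1) := by
        rw [hdk1]
        calc 1 < e := he
        _ ≤ e * b ^ (k + 1 - L) := Nat.le_mul_of_pos_right _ (pow_pos (by omega) _)
      refine ⟨hpos1, ?_⟩
      apply childDvd hbne (by omega)
      · rw [hdk]
        exact mul_ne_zero hene (pow_ne_zero _ hbne)
      · rw [hgcd, hdk, hdk1, mul_assoc, ← pow_succ]
        congr 2
        omega

private lemma prodCycloDvd {f : Polynomial ℤ} {N : Finset ℕ}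
    (h : ∀ e ∈ N, 1 < e ∧ cyclotomic e ℤ ∣ f) :
    (∏ e ∈ N, cyclotomic e ℤ) ∣ f := by
  classical
  induction N using Finset.induction with
  | empty => simpa using one_dvd f
  | @insert a s ha ih =>
    rw [Finset.prod_insert ha]
    obtain ⟨ha1, hadvd⟩ := h a (Finset.mem_insert_self a s)
    have hps : (∏ e ∈ s, cyclotomic e ℤ) ∣ f :=
      ih fun e he => h e (Finset.mem_insert_of_mem he)
    have hprime : Prime (cyclotomic a ℤ) :=
      UniqueFactorizationMonoid.irreducible_iff_prime.mp (cyclotomic.irreducible (by omega))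
    have hnd : ¬ cyclotomic a ℤ ∣ ∏ e ∈ s, cyclotomic e ℤ := by
      intro hdvd
      obtain ⟨e, hes, hae⟩ := hprime.exists_mem_finset_dvd hdvd
      obtain ⟨he1, -⟩ := h e (Finset.mem_insert_of_mem hes)
      have hassoc : Associated (cyclotomic a ℤ) (cyclotomic e ℤ) :=
        (cyclotomic.irreducible (show 0 < a by omega)).associated_of_dvd
          (cyclotomic.irreducible (by omega)) hae
      have heq : cyclotomic a ℤ = cyclotomic e ℤ :=
        eq_of_monic_of_associated (cyclotomic.monic a ℤ) (cyclotomic.monic e ℤ) hassoc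
      have : a = e := cyclotomic_injective heq
      exact ha (this ▸ hes)
    obtain ⟨c, hc⟩ := hps
    have hac : cyclotomic a ℤ ∣ c := by
      rcases hprime.2.2 _ _ (hc ▸ hadvd) with h' | h'
      · exact absurd h' hnd
      · exact h'
    obtain ⟨c', hc'⟩ := hac
    exact ⟨c', by rw [hc, hc']; ring⟩

/-- Every tile digit set admits a blocking `N` of the Φ-tree whose kernel polynomial
`∏_{d ∈ N} Φ_d(X)` divides `P_D(X)`. -/
theorem stmt16 (b : ℕ) (hb : 2 ≤ b) (D : Finset ℕ) (hcard : D.card = b)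
    (h0 : 0 ∈ D) (hgcd : D.gcd id = 1) (hK : Kenyon b D) :
    ∃ N : Finset ℕ, IsPhiBlocking b N ∧ (∏ d ∈ N, cyclotomic d ℤ) ∣ mask D := by
  classical
  have hbne : b ≠ 0 := by omega
  have hD0 : mask D ≠ 0 := by
    intro h
    have h1 : eval (1 : ℤ) (mask D) = D.card := maskCard D
    rw [h, eval_zero] at h1
    have : D.card = 0 := by exact_mod_cast h1.symm
    omega
  have hSfin := cycloDvdFinite hD0
  set Sf : Finset ℕ := hSfin.toFinset with hSfdef
  have hSmem : ∀ {s : ℕ}, s ∈ Sf ↔ (1 < s ∧ cyclotomic s ℤ ∣ mask D) := fun {s} =>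
    hSfin.mem_toFinset
  set B : ℕ := Sf.sup id with hBdef
  have hSle : ∀ s, 1 < s → cyclotomic s ℤ ∣ mask D → s ≤ B := fun s h1 h2 =>
    Finset.le_sup (f := id) (hSmem.mpr ⟨h1, h2⟩)
  -- every path meets the set S
  have hmeets : ∀ d : ℕ → ℕ, IsPhiPath b d →
      ∃ k, 1 ≤ k ∧ 1 < d k ∧ cyclotomic (d k) ℤ ∣ mask D := by
    intro d hd
    set j : ℕ := B + 1 with hj
    have hdj : d j ∣ b ^ j := pathDvd hbne hd j (by omega)
    have hdj1 : 1 < d j := pathPos hd j (by omega)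
    have hgrow : 2 ^ j ≤ d j := by
      have := pathGrowth hbne hd B
      rwa [← hj] at this
    have hm1 : 1 ≤ b ^ j / d j :=
      Nat.div_pos (Nat.le_of_dvd (pow_pos (by omega) j) hdj) (by omega)
    obtain ⟨k, hk1, hsdvd⟩ := kenyonSpec hb hK hm1
    rcases le_or_gt k j with hkj | hjk
    · have hs := kenyonOrderLow hbne (by omega : d j ≠ 0) hdj hkj
      have hanc := pathAncestor hbne hd (j - k) k hk1
      have hkj' : k + (j - k) = j := by omega
      rw [hkj'] at hanc
      rw [hs, hanc] at hsdvd
      exact ⟨k, hk1, pathPos hd k hk1, hsdvd⟩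
    · exfalso
      have hs := kenyonOrderHigh hbne (by omega : d j ≠ 0) hdj (le_of_lt hjk)
      rw [hs] at hsdvd
      have hfac : 1 ≤ b ^ (k - j) := Nat.one_le_two_pow.trans
        (Nat.pow_le_pow_left (by omega) _)
      have h1lt : 1 < b ^ (k - j) * d j := by
        calc 1 < d j := hdj1
        _ ≤ b ^ (k - j) * d j := Nat.le_mul_of_pos_left _ (by omega)
      have hle := hSle _ h1lt hsdvd
      have hmono : d j ≤ b ^ (k - j) * d j := Nat.le_mul_of_pos_left _ (by omega)
      have hBpow : B < 2 ^ B := Nat.lt_two_pow_self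
      have h2j : 2 ^ B ≤ 2 ^ j := Nat.pow_le_pow_right (by omega) (by omega)
      omega
  -- the blocking
  set N : Finset ℕ := Sf.filter (fun e =>
    (∃ k, e ∣ b ^ (k + 1)) ∧
    ∀ t, 1 ≤ t → ¬ (1 < e / Nat.gcd e (b ^ t) ∧
      cyclotomic (e / Nat.gcd e (b ^ t)) ℤ ∣ mask D)) with hNdef
  have hNmem : ∀ {e : ℕ}, e ∈ N ↔ ((1 < e ∧ cyclotomic e ℤ ∣ mask D) ∧
      (∃ k, e ∣ b ^ (k + 1)) ∧
      ∀ t, 1 ≤ t → ¬ (1 < e / Nat.gcd e (b ^ t) ∧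
        cyclotomic (e / Nat.gcd e (b ^ t)) ℤ ∣ mask D)) := by
    intro e
    rw [hNdef, Finset.mem_filter, hSmem]
  refine ⟨N, ⟨?_, ?_⟩, ?_⟩
  · -- every element of N is on a path
    intro e heN
    obtain ⟨⟨he1, -⟩, hdvd, -⟩ := hNmem.mp heN
    exact ⟨he1, existsPathThrough hb he1 hdvd⟩
  · -- every path meets N exactly once
    intro d hd
    have hex : ∃ k, 1 ≤ k ∧ 1 < d k ∧ cyclotomic (d k) ℤ ∣ mask D := hmeets d hd
    set k0 : ℕ := Nat.find hex with hk0def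
    obtain ⟨hk01, hk0lt, hk0dvd⟩ : 1 ≤ k0 ∧ 1 < d k0 ∧ cyclotomic (d k0) ℤ ∣ mask D :=
      Nat.find_spec hex
    have hmin : ∀ i, i < k0 → ¬ (1 ≤ i ∧ 1 < d i ∧ cyclotomic (d i) ℤ ∣ mask D) :=
      fun i hi => Nat.find_min hex hi
    have hk0N : d k0 ∈ N := by
      rw [hNmem]
      refine ⟨⟨hk0lt, hk0dvd⟩, ⟨k0 - 1, ?_⟩, ?_⟩
      · rw [Nat.sub_add_cancel hk01]
        exact pathDvd hbne hd k0 hk01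
      · intro t ht ⟨h1, h2⟩
        rcases le_or_gt (t + 1) k0 with htk | htk
        · have hanc := pathAncestor hbne hd t (k0 - t) (by omega)
          rw [show k0 - t + t = k0 by omega] at hanc
          rw [hanc] at h1 h2
          exact hmin (k0 - t) (by omega) ⟨by omega, h1, h2⟩
        · have hdvd0 : d k0 ∣ b ^ t :=
            (pathDvd hbne hd k0 hk01).trans (pow_dvd_pow b (by omega))
          rw [divGcdEqOne (by omega) hdvd0] at h1
          omega
    refine ⟨k0, ⟨hk01, hk0N⟩, ?_⟩
    rintro k' ⟨hk'1, hk'N⟩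
    obtain ⟨⟨hk'lt, hk'dvd⟩, -, hk'min⟩ := hNmem.mp hk'N
    have hk0le : k0 ≤ k' := Nat.find_min' hex ⟨hk'1, hk'lt, hk'dvd⟩
    rcases Nat.eq_or_lt_of_le hk0le with h | h
    · omega
    · exfalso
      have hanc := pathAncestor hbne hd (k' - k0) k0 hk01
      rw [show k0 + (k' - k0) = k' by omega] at hanc
      exact hk'min (k' - k0) (by omega) (by rw [hanc]; exact ⟨hk0lt, hk0dvd⟩)
  · -- the kernel polynomial divides the mask
    apply prodCycloDvd
    intro e heN
    exact (hNmem.mp heN).1
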